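/- A symmetric tensor A of order m and dimension n is copositive if and only if no principal sub-tensor of A has a negative Z^{++}-eigenvalue, i.e., no principal sub-tensor B admits λ < 0 and a strictly positive vector v with v^T v = 1 and B v^{m-1} = λ v. -/

import Mathlib

open Finset

/-- `A x^m` for an `m`-order `n`-dimensional tensor `A`. -/
noncomputable def tpow {m n : ℕ} (A : (Fin m → Fin n) → ℝ) (x : Fin n → ℝ) : ℝ :=
  ∑ f : Fin m → Fin n, A f * ∏ k, x (f k)

/-- `A` is symmetric: entries invariant under permutations of indices. -/
def SymT {m n : ℕ} (A : (Fin m → Fin n) → ℝ) : Prop :=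
  ∀ (σ : Equiv.Perm (Fin m)) (f : Fin m → Fin n), A (f ∘ σ) = A f

/-- `A` is copositive. -/
def CoposT {m n : ℕ} (A : (Fin m → Fin n) → ℝ) : Prop :=
  ∀ x : Fin n → ℝ, (∀ i, 0 ≤ x i) → 0 ≤ tpow A x

/-- `A` is strictly copositive. -/
def StrictCoposT {m n : ℕ} (A : (Fin m → Fin n) → ℝ) : Prop :=
  ∀ x : Fin n → ℝ, (∀ i, 0 ≤ x i) → x ≠ 0 → 0 < tpow A x

/-- `(A_S x^{m-1})_i` : the `i`-th component of the contraction of the principal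
sub-tensor of `A` on the index set `S` with `x` taken `m-1` times. -/
noncomputable def tcontr {m n : ℕ} (hm : 0 < m) (A : (Fin m → Fin n) → ℝ)
    (S : Finset (Fin n)) (x : Fin n → ℝ) (i : Fin n) : ℝ :=
  ∑ f ∈ Finset.univ.filter
      (fun f : Fin m → Fin n => f ⟨0, hm⟩ = i ∧ ∀ k, f k ∈ S),
    A f * ∏ k ∈ Finset.univ.erase (⟨0, hm⟩ : Fin m), x (f k)

section helpers

variable {m n : ℕ}

/-- homogeneity -/
lemma tpow_smul (A : (Fin m → Fin n) → ℝ) (t : ℝ) (x : Fin n → ℝ) :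
    tpow A (t • x) = t ^ m * tpow A x := by
  unfold tpow
  rw [mul_sum]
  refine Finset.sum_congr rfl fun f _ => ?_
  have : ∏ k, (t • x) (f k) = ∏ k : Fin m, t * x (f k) := rfl
  rw [this, Finset.prod_mul_distrib, Finset.prod_const, card_univ, Fintype.card_fin]
  ring

lemma tpow_zero (hm : 0 < m) (A : (Fin m → Fin n) → ℝ) :
    tpow A (0 : Fin n → ℝ) = 0 := by
  unfold tpow
  refine Finset.sum_eq_zero fun f _ => ?_
  rw [Finset.prod_eq_zero (Finset.mem_univ (⟨0, hm⟩ : Fin m)) rfl, mul_zero]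

lemma tpow_continuous (A : (Fin m → Fin n) → ℝ) : Continuous (tpow A) := by
  unfold tpow
  exact continuous_finset_sum _ fun f _ =>
    continuous_const.mul (continuous_finset_prod _ fun k _ => continuous_apply (f k))

/-- fiberwise decomposition of tpow by value of f at index 0 -/
lemma tpow_fiber (hm : 0 < m) (A : (Fin m → Fin n) → ℝ) (x : Fin n → ℝ) :
    tpow A x = ∑ i : Fin n, x i *
      ∑ f ∈ univ.filter (fun f : Fin m → Fin n => f ⟨0, hm⟩ = i),
        A f * ∏ k ∈ univ.erase (⟨0, hm⟩ : Fin m), x (f k) := by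
  classical
  unfold tpow
  rw [← Finset.sum_fiberwise (univ : Finset (Fin m → Fin n))
      (fun f => f ⟨0, hm⟩) (fun f => A f * ∏ k, x (f k))]
  refine Finset.sum_congr rfl fun i _ => ?_
  rw [Finset.mul_sum]
  refine Finset.sum_congr rfl fun f hf => ?_
  simp only [mem_filter] at hf
  rw [← Finset.mul_prod_erase univ (fun k => x (f k)) (Finset.mem_univ (⟨0, hm⟩ : Fin m))]
  rw [hf.2]
  ring

/-- the fiber sum equals tcontr when x is supported on S and i ∈ S -/
lemma fiber_eq_tcontr (hm : 0 < m) (A : (Fin m → Fin n) → ℝ) (S : Finset (Fin n))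
    (x : Fin n → ℝ) (hx : ∀ i ∉ S, x i = 0) {i : Fin n} (hi : i ∈ S) :
    ∑ f ∈ univ.filter (fun f : Fin m → Fin n => f ⟨0, hm⟩ = i),
        A f * ∏ k ∈ univ.erase (⟨0, hm⟩ : Fin m), x (f k) = tcontr hm A S x i := by
  classical
  unfold tcontr
  symm
  refine Finset.sum_subset ?_ ?_
  · intro f hf
    simp only [mem_filter, mem_univ, true_and] at hf ⊢
    exact hf.1
  · intro f hf hnf
    simp only [mem_filter, mem_univ, true_and] at hf hnf
    have hz : ∃ k, f k ∉ S := by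
      by_contra h
      push_neg at h
      exact hnf ⟨hf, h⟩
    obtain ⟨k, hk⟩ := hz
    have hkz : k ≠ (⟨0, hm⟩ : Fin m) := by
      rintro rfl
      rw [hf] at hk
      exact hk hi
    rw [Finset.prod_eq_zero (Finset.mem_erase.mpr ⟨hkz, Finset.mem_univ k⟩) (hx _ hk), mul_zero]

lemma tpow_supported (hm : 0 < m) (A : (Fin m → Fin n) → ℝ) (S : Finset (Fin n))
    (x : Fin n → ℝ) (hx : ∀ i ∉ S, x i = 0) :
    tpow A x = ∑ i ∈ S, x i * tcontr hm A S x i := by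
  classical
  rw [tpow_fiber hm A x]
  rw [← Finset.sum_subset (Finset.subset_univ S) (fun i _ hi => by rw [hx i hi, zero_mul])]
  exact Finset.sum_congr rfl fun i hi => by rw [fiber_eq_tcontr hm A S x hx hi]

lemma sym_swap (hm : 0 < m) {A : (Fin m → Fin n) → ℝ} (hA : SymT A)
    (x h : Fin n → ℝ) (k : Fin m) :
    ∑ f : Fin m → Fin n, A f * ((∏ j ∈ univ.erase k, x (f j)) * h (f k))
      = ∑ f : Fin m → Fin n,
          A f * ((∏ j ∈ univ.erase (⟨0, hm⟩ : Fin m), x (f j)) * h (f ⟨0, hm⟩)) := by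
  classical
  set z : Fin m := ⟨0, hm⟩ with hz
  set σ : Equiv.Perm (Fin m) := Equiv.swap z k with hσ
  refine Fintype.sum_equiv (Equiv.arrowCongr σ (Equiv.refl (Fin n))) _ _ fun f => ?_
  have he : (Equiv.arrowCongr σ (Equiv.refl (Fin n))) f = f ∘ σ := by
    funext j
    simp [hσ, Equiv.arrowCongr, Equiv.symm_swap]
  rw [he, hA σ f]
  congr 1
  have h1 : (f ∘ σ) z = f k := by simp [hσ, Equiv.swap_apply_left]
  have h2 : ∏ j ∈ univ.erase z, x ((f ∘ σ) j) = ∏ j ∈ univ.erase k, x (f j) := by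
    rw [show (univ.erase k : Finset (Fin m)) = (univ.erase z).image σ by
      rw [Finset.image_erase (σ.injective)]
      simp [hσ, Equiv.swap_apply_left, Finset.image_univ_equiv]]
    rw [Finset.prod_image (fun a _ b _ hab => σ.injective hab)]
    rfl
  rw [h1, h2]

lemma deriv_sym (hm : 0 < m) {A : (Fin m → Fin n) → ℝ} (hA : SymT A)
    (x h : Fin n → ℝ) :
    ∑ f : Fin m → Fin n, A f * ∑ k : Fin m, (∏ j ∈ univ.erase k, x (f j)) * h (f k)
      = (m : ℝ) * ∑ i : Fin n, h i *
          ∑ f ∈ univ.filter (fun f : Fin m → Fin n => f ⟨0, hm⟩ = i),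
            A f * ∏ j ∈ univ.erase (⟨0, hm⟩ : Fin m), x (f j) := by
  classical
  have step1 : ∑ f : Fin m → Fin n, A f * ∑ k : Fin m, (∏ j ∈ univ.erase k, x (f j)) * h (f k)
      = ∑ k : Fin m, ∑ f : Fin m → Fin n, A f * ((∏ j ∈ univ.erase k, x (f j)) * h (f k)) := by
    rw [Finset.sum_comm]
    exact Finset.sum_congr rfl fun f _ => by rw [Finset.mul_sum]
  rw [step1]
  rw [Finset.sum_congr rfl fun k _ => sym_swap hm hA x h k, Finset.sum_const, card_univ,
    Fintype.card_fin, nsmul_eq_mul]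
  congr 1
  rw [← Finset.sum_fiberwise (univ : Finset (Fin m → Fin n)) (fun f => f ⟨0, hm⟩)
      (fun f => A f * ((∏ j ∈ univ.erase (⟨0, hm⟩ : Fin m), x (f j)) * h (f ⟨0, hm⟩)))]
  refine Finset.sum_congr rfl fun i _ => ?_
  rw [Finset.mul_sum]
  refine Finset.sum_congr rfl fun f hf => ?_
  simp only [mem_filter] at hf
  rw [hf.2]
  ring

noncomputable def tderiv (A : (Fin m → Fin n) → ℝ) (x : Fin n → ℝ) :
    (Fin n → ℝ) →L[ℝ] ℝ :=
  ∑ f : Fin m → Fin n, A f •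
    ∑ k : Fin m, (∏ j ∈ univ.erase k, x (f j)) •
      (ContinuousLinearMap.proj (R := ℝ) (φ := fun _ : Fin n => ℝ) (f k))

lemma tderiv_apply (A : (Fin m → Fin n) → ℝ) (x h : Fin n → ℝ) :
    tderiv A x h
      = ∑ f : Fin m → Fin n, A f * ∑ k : Fin m, (∏ j ∈ univ.erase k, x (f j)) * h (f k) := by
  simp [tderiv, ContinuousLinearMap.sum_apply, ContinuousLinearMap.smul_apply,
    ContinuousLinearMap.proj_apply, smul_eq_mul]

lemma tpow_hasDeriv (A : (Fin m → Fin n) → ℝ) (x : Fin n → ℝ) :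
    HasStrictFDerivAt (tpow A) (tderiv A x) x := by
  unfold tpow tderiv
  apply HasStrictFDerivAt.fun_sum
  intro f _
  have hp : HasStrictFDerivAt (fun y : Fin n → ℝ => ∏ k, y (f k))
      (∑ k : Fin m, (∏ j ∈ univ.erase k, x (f j)) •
        (ContinuousLinearMap.proj (R := ℝ) (φ := fun _ : Fin n => ℝ) (f k))) x :=
    HasStrictFDerivAt.finset_prod fun k _ =>
      (ContinuousLinearMap.proj (R := ℝ) (φ := fun _ : Fin n => ℝ) (f k)).hasStrictFDerivAt
  exact hp.const_mul (A f)

end helpers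

theorem stmt10 {m n : ℕ} (hm : 0 < m) (A : (Fin m → Fin n) → ℝ) (hA : SymT A) :
    CoposT A ↔
      ¬ ∃ (S : Finset (Fin n)) (lam : ℝ) (v : Fin n → ℝ),
        S.Nonempty ∧ lam < 0 ∧ (∀ i ∈ S, 0 < v i) ∧ (∑ i ∈ S, v i ^ 2 = 1) ∧
        ∀ i ∈ S, tcontr hm A S v i = lam * v i := by
  classical
  constructor
  · rintro hcop ⟨S, lam, v, hSne, hlam, hv, hv1, heig⟩
    set x : Fin n → ℝ := fun i => if i ∈ S then v i else 0 with hxdef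
    have hx0 : ∀ i ∉ S, x i = 0 := fun i hi => by simp [hxdef, hi]
    have hxS : ∀ i ∈ S, x i = v i := fun i hi => by simp [hxdef, hi]
    have hxnn : ∀ i, 0 ≤ x i := by
      intro i
      by_cases h : i ∈ S
      · rw [hxS i h]; exact (hv i h).le
      · rw [hx0 i h]
    have hctr : ∀ i ∈ S, tcontr hm A S x i = tcontr hm A S v i := by
      intro i hi
      unfold tcontr
      refine Finset.sum_congr rfl fun f hf => ?_
      simp only [mem_filter] at hf
      congr 1
      exact Finset.prod_congr rfl fun k _ => hxS _ (hf.2.2 k)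
    have hval : tpow A x = lam := by
      rw [tpow_supported hm A S x hx0]
      calc ∑ i ∈ S, x i * tcontr hm A S x i = ∑ i ∈ S, lam * v i ^ 2 := by
            refine Finset.sum_congr rfl fun i hi => ?_
            rw [hxS i hi, hctr i hi, heig i hi]; ring
        _ = lam := by rw [← mul_sum, hv1, mul_one]
    have hge := hcop x hxnn
    rw [hval] at hge
    exact absurd hge (not_le.mpr hlam)
  · intro hno x₀ hx₀
    by_contra hneg
    push_neg at hneg
    apply hno
    -- normalization
    have hsum_pos : 0 < ∑ i, x₀ i ^ 2 := by
      rcases (Finset.sum_nonneg fun i (_ : i ∈ univ) => sq_nonneg (x₀ i)).lt_or_eq with h | h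
      · exact h
      · exfalso
        have hx00 : x₀ = 0 := by
          funext i
          have := (Finset.sum_eq_zero_iff_of_nonneg
            (fun i (_ : i ∈ univ) => sq_nonneg (x₀ i))).mp h.symm i (mem_univ i)
          exact pow_eq_zero_iff (two_ne_zero) |>.mp this
        rw [hx00, tpow_zero hm A] at hneg
        exact lt_irrefl 0 hneg
    set N : ℝ := Real.sqrt (∑ i, x₀ i ^ 2) with hNdef
    have hNpos : 0 < N := Real.sqrt_pos.mpr hsum_pos
    set y₀ : Fin n → ℝ := N⁻¹ • x₀ with hy₀def
    have hy₀nn : ∀ i, 0 ≤ y₀ i := fun i =>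
      mul_nonneg (inv_nonneg.mpr hNpos.le) (hx₀ i)
    have hy₀sum : ∑ i, y₀ i ^ 2 = 1 := by
      have hsq : ∀ i, y₀ i ^ 2 = N⁻¹ ^ 2 * x₀ i ^ 2 := fun i => by
        rw [hy₀def]; simp [mul_pow]
      rw [Finset.sum_congr rfl fun i _ => hsq i, ← mul_sum, inv_pow,
        Real.sq_sqrt hsum_pos.le, inv_mul_cancel₀ (ne_of_gt hsum_pos)]
    have hy₀neg : tpow A y₀ < 0 := by
      rw [hy₀def, tpow_smul]
      exact mul_neg_of_pos_of_neg (pow_pos (inv_pos.mpr hNpos) m) hneg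
    -- compact minimization
    set K : Set (Fin n → ℝ) := {w | (∀ i, 0 ≤ w i) ∧ ∑ i, w i ^ 2 = 1} with hKdef
    have hKclosed : IsClosed K := by
      have h1 : IsClosed {w : Fin n → ℝ | ∀ i, 0 ≤ w i} := by
        have he : {w : Fin n → ℝ | ∀ i, 0 ≤ w i} = ⋂ i, {w : Fin n → ℝ | 0 ≤ w i} := by
          ext w; simp [Set.mem_iInter]
        rw [he]
        exact isClosed_iInter fun i => isClosed_le continuous_const (continuous_apply i)
      have h2 : IsClosed {w : Fin n → ℝ | ∑ i, w i ^ 2 = 1} :=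
        isClosed_eq (continuous_finset_sum _ fun i _ => (continuous_apply i).pow 2)
          continuous_const
      exact h1.inter h2
    have hKbdd : Bornology.IsBounded K := by
      rw [isBounded_iff_forall_norm_le]
      refine ⟨1, fun w hw => ?_⟩
      rw [pi_norm_le_iff_of_nonneg zero_le_one]
      intro i
      rw [Real.norm_eq_abs, ← sq_le_one_iff_abs_le_one, ← hw.2]
      exact Finset.single_le_sum (fun j (_ : j ∈ univ) => sq_nonneg (w j)) (mem_univ i)
    have hKcompact : IsCompact K := Metric.isCompact_of_isClosed_isBounded hKclosed hKbdd
    obtain ⟨w, hwK, hwmin⟩ := hKcompact.exists_isMinOn ⟨y₀, hy₀nn, hy₀sum⟩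
      (tpow_continuous A).continuousOn
    have hwneg : tpow A w < 0 :=
      lt_of_le_of_lt (isMinOn_iff.mp hwmin y₀ ⟨hy₀nn, hy₀sum⟩) hy₀neg
    -- support
    set S : Finset (Fin n) := univ.filter (fun i => 0 < w i) with hSdef
    have hwS : ∀ i ∈ S, 0 < w i := fun i hi => by
      simpa [hSdef] using hi
    have hw0 : ∀ i ∉ S, w i = 0 := by
      intro i hi
      simp only [hSdef, mem_filter, mem_univ, true_and, not_lt] at hi
      exact le_antisymm hi (hwK.1 i)
    have hSsum : ∑ i ∈ S, w i ^ 2 = 1 := by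
      rw [Finset.sum_subset (Finset.subset_univ S)
        (fun i _ hi => by rw [hw0 i hi]; ring)]
      exact hwK.2
    have hSne : S.Nonempty := by
      rw [Finset.nonempty_iff_ne_empty]
      intro h
      rw [h] at hSsum
      simp at hSsum
    -- the subspace of vectors supported on S
    let ιL : ({ i // i ∈ S } → ℝ) →ₗ[ℝ] (Fin n → ℝ) :=
      { toFun := fun y i => if h : i ∈ S then y ⟨i, h⟩ else 0
        map_add' := fun y z => by funext i; by_cases h : i ∈ S <;> simp [h]
        map_smul' := fun c y => by funext i; by_cases h : i ∈ S <;> simp [h] }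
    let ιC : ({ i // i ∈ S } → ℝ) →L[ℝ] (Fin n → ℝ) := ιL.toContinuousLinearMap
    have hιapp : ∀ (y : { i // i ∈ S } → ℝ) (i : Fin n),
        ιC y i = if h : i ∈ S then y ⟨i, h⟩ else 0 := fun y i => rfl
    set w' : { i // i ∈ S } → ℝ := fun j => w j with hw'def
    have hιw : ιC w' = w := by
      funext i
      rw [hιapp]
      by_cases h : i ∈ S
      · rw [dif_pos h]
      · rw [dif_neg h, hw0 i h]
    have hιsum : ∀ y : { i // i ∈ S } → ℝ,
        ∑ i, (ιC y i) ^ 2 = ∑ j : { i // i ∈ S }, (y j) ^ 2 := by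
      intro y
      rw [← Finset.sum_subset (Finset.subset_univ S)
        (fun i _ hi => by rw [hιapp, dif_neg hi]; ring)]
      rw [← Finset.sum_coe_sort S (fun i => (ιC y i) ^ 2)]
      refine Finset.sum_congr rfl fun j _ => ?_
      rw [hιapp, dif_pos j.2]
    -- objective and constraint on the subspace
    set F : ({ i // i ∈ S } → ℝ) → ℝ := fun y => tpow A (ιC y) with hFdef
    set c : ({ i // i ∈ S } → ℝ) → ℝ := fun y => ∑ j, y j * y j with hcdef
    have hcw : c w' = 1 := by
      calc c w' = ∑ j : { i // i ∈ S }, w (↑j) ^ 2 := by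
            refine Finset.sum_congr rfl fun j _ => ?_
            rw [hw'def]; ring
        _ = ∑ i ∈ S, w i ^ 2 := Finset.sum_coe_sort S (fun i => w i ^ 2)
        _ = 1 := hSsum
    -- local minimality on the constraint set
    have hloc : IsLocalMinOn F {y | c y = c w'} w' := by
      show ∀ᶠ y in nhdsWithin w' {y | c y = c w'}, F w' ≤ F y
      have hU : IsOpen {y : { i // i ∈ S } → ℝ | ∀ j, 0 < y j} := by
        have he : {y : { i // i ∈ S } → ℝ | ∀ j, 0 < y j}
            = ⋂ j, (fun y : { i // i ∈ S } → ℝ => y j) ⁻¹' Set.Ioi 0 := by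
          ext y; simp [Set.mem_iInter]
        rw [he]
        exact isOpen_iInter_of_finite fun j => isOpen_Ioi.preimage (continuous_apply j)
      have hwU : w' ∈ {y : { i // i ∈ S } → ℝ | ∀ j, 0 < y j} := fun j => hwS _ j.2
      filter_upwards [mem_nhdsWithin_of_mem_nhds (hU.mem_nhds hwU),
        self_mem_nhdsWithin] with y hyU hyc
      have hKy : ιC y ∈ K := by
        refine ⟨fun i => ?_, ?_⟩
        · rw [hιapp]
          by_cases h : i ∈ S
          · rw [dif_pos h]; exact (hyU ⟨i, h⟩).le
          · rw [dif_neg h]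
        · rw [hιsum y]
          have h1 : c y = 1 := by rw [Set.mem_setOf_eq.mp hyc, hcw]
          rw [← h1, hcdef]
          exact Finset.sum_congr rfl fun j _ => sq (y j)
      show tpow A (ιC w') ≤ tpow A (ιC y)
      rw [hιw]
      exact isMinOn_iff.mp hwmin (ιC y) hKy
    -- derivatives
    have hFd : HasStrictFDerivAt F ((tderiv A w).comp ιC) w' := by
      have h1 : HasStrictFDerivAt (tpow A) (tderiv A w) (ιC w') := by
        rw [hιw]; exact tpow_hasDeriv A w
      exact h1.comp w' ιC.hasStrictFDerivAt
    set c' : ({ i // i ∈ S } → ℝ) →L[ℝ] ℝ :=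
      ∑ j : { i // i ∈ S },
        ((w' j) • ContinuousLinearMap.proj j + (w' j) • ContinuousLinearMap.proj j) with hc'def
    have hcd : HasStrictFDerivAt c c' w' := by
      apply HasStrictFDerivAt.fun_sum
      intro j _
      exact ((ContinuousLinearMap.proj (R := ℝ) (φ := fun _ : { i // i ∈ S } => ℝ)
        j).hasStrictFDerivAt (x := w')).mul
        ((ContinuousLinearMap.proj (R := ℝ) (φ := fun _ : { i // i ∈ S } => ℝ)
          j).hasStrictFDerivAt (x := w'))
    have hex : IsLocalExtrOn F {y | c y = c w'} w' := Or.inl hloc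
    obtain ⟨a, b, hab, heq⟩ := hex.exists_multipliers_of_hasStrictFDerivAt_1d hcd hFd
    -- evaluate the multiplier identity on basis vectors
    have hm0 : (m : ℝ) ≠ 0 := Nat.cast_ne_zero.mpr hm.ne'
    have hc'single : ∀ j : { i // i ∈ S }, c' (Pi.single j 1) = 2 * w' j := by
      intro j
      rw [hc'def]
      simp only [ContinuousLinearMap.coe_sum', Finset.sum_apply,
        ContinuousLinearMap.add_apply, ContinuousLinearMap.smul_apply,
        ContinuousLinearMap.proj_apply, smul_eq_mul, Pi.single_apply, mul_ite, mul_one,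
        mul_zero, Finset.sum_add_distrib, Finset.sum_ite_eq', mem_univ, if_true]
      ring
    have hιsingle : ∀ j : { i // i ∈ S }, ιC (Pi.single j 1) = Pi.single (j : Fin n) (1 : ℝ) := by
      intro j
      funext i
      rw [hιapp]
      by_cases h : i ∈ S
      · rw [dif_pos h, Pi.single_apply, Pi.single_apply]
        by_cases h2 : i = (j : Fin n)
        · rw [if_pos h2, if_pos (Subtype.ext h2)]
        · rw [if_neg h2, if_neg (fun hc => h2 (by rw [← Subtype.coe_mk i h, hc]))]
      · rw [dif_neg h, Pi.single_apply, if_neg]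
        rintro rfl
        exact h j.2
    have htd : ∀ i₀ ∈ S, tderiv A w (Pi.single i₀ (1 : ℝ)) = (m : ℝ) * tcontr hm A S w i₀ := by
      intro i₀ hi₀
      rw [tderiv_apply, deriv_sym hm hA w (Pi.single i₀ 1)]
      congr 1
      rw [Finset.sum_eq_single i₀
        (fun i _ hne => by rw [Pi.single_apply, if_neg hne, zero_mul])
        (fun h => absurd (mem_univ i₀) h)]
      rw [Pi.single_apply, if_pos rfl, one_mul, fiber_eq_tcontr hm A S w hw0 hi₀]
    have key : ∀ j : { i // i ∈ S },
        a * (2 * w' j) + b * ((m : ℝ) * tcontr hm A S w (↑j)) = 0 := by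
      intro j
      have h0 := ContinuousLinearMap.ext_iff.mp heq (Pi.single j 1)
      simp only [ContinuousLinearMap.add_apply, ContinuousLinearMap.smul_apply,
        ContinuousLinearMap.coe_comp', Function.comp_apply, ContinuousLinearMap.zero_apply,
        smul_eq_mul] at h0
      rw [hc'single j, hιsingle j, htd (↑j) j.2] at h0
      exact h0
    have hb : b ≠ 0 := by
      intro hb0
      obtain ⟨i₀, hi₀⟩ := hSne
      have hk := key ⟨i₀, hi₀⟩
      rw [hb0, zero_mul, add_zero] at hk
      have ha : a = 0 := by
        have hpos : 0 < w' ⟨i₀, hi₀⟩ := hwS _ hi₀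
        rcases mul_eq_zero.mp hk with h | h
        · exact h
        · exfalso; nlinarith
      exact hab (by rw [ha, hb0]; rfl)
    set μ : ℝ := -(2 * a) / (b * (m : ℝ)) with hμdef
    have heig : ∀ i ∈ S, tcontr hm A S w i = μ * w i := by
      intro i hi
      have hbm : b * (m : ℝ) ≠ 0 := mul_ne_zero hb hm0
      rw [hμdef, div_mul_eq_mul_div, eq_div_iff hbm]
      linear_combination key ⟨i, hi⟩
    have hμlam : tpow A w = μ := by
      have : tpow A w = μ * 1 := by
        rw [tpow_supported hm A S w hw0, ← hSsum, Finset.mul_sum]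
        exact Finset.sum_congr rfl fun i hi => by rw [heig i hi]; ring
      rw [this, mul_one]
    exact ⟨S, μ, w, hSne, hμlam ▸ hwneg, hwS, hSsum, heig⟩
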